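/- arXiv:2304.14760 — 2 statements merged into one kernel-verified Lean document; each statement's English description precedes it below -/
import Mathlib

section
/- Prime implicants of a fixated disjunction: let α ∨ β be a disjunction of NNFs satisfying the property that β is a single X-literal ℓ such that ℓ ⊨ ℓ' and ℓ ≠ ℓ' for every X-literal ℓ' occurring in α. Then the set of prime implicants of α ∨ ℓ equals the union of the prime implicants of α with {ℓ}, after removing subsumed terms. -/
open scoped Classical

/-- Formulas over finite-domain variables: each variable `X : V` has domain `D X`.
A literal of `X` is (intended to be) a nonempty proper subset of `D X`'s states. -/
inductive Form (V : Type) (D : V → Type) : Type where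
  | top : Form V D
  | bot : Form V D
  | lit : (X : V) → Set (D X) → Form V D
  | neg : Form V D → Form V D
  | and : Form V D → Form V D → Form V D
  | or : Form V D → Form V D → Form V D

namespace Form

variable {V : Type} {D : V → Type}

/-- Satisfaction of a formula by a world. -/
def sat (w : ∀ X, D X) : Form V D → Prop
  | top => True
  | bot => False
  | lit X s => w X ∈ s
  | neg φ => ¬ sat w φ
  | and φ ψ => sat w φ ∧ sat w ψ
  | or φ ψ => sat w φ ∨ sat w ψ

/-- Conditioning `Δ|x` of a formula on state `x` of variable `X`: each `X`-literal
`ℓ` is replaced by `⊤` if `x ∈ ℓ` and by `⊥` otherwise. -/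
noncomputable def cond (X : V) (x : D X) : Form V D → Form V D
  | top => top
  | bot => bot
  | lit Y s => if h : X = Y then (if h ▸ x ∈ s then top else bot) else lit Y s
  | neg φ => neg (cond X x φ)
  | and φ ψ => and (cond X x φ) (cond X x ψ)
  | or φ ψ => or (cond X x φ) (cond X x ψ)

/-- The selection operator `⊓x·Δ := (Δ|x) ∧ Δ`. -/
noncomputable def sel (X : V) (x : D X) (Δ : Form V D) : Form V D :=
  and (cond X x Δ) Δ

/-- Logical equivalence of formulas (same models). -/
def equiv (φ ψ : Form V D) : Prop := ∀ w, sat w φ ↔ sat w ψ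

/-- Variable `X` occurs (appears) in the formula. -/
def occurs (X : V) : Form V D → Prop
  | top => False
  | bot => False
  | lit Y _ => Y = X
  | neg φ => occurs X φ
  | and φ ψ => occurs X φ ∨ occurs X ψ
  | or φ ψ => occurs X φ ∨ occurs X ψ

/-- NNF: negation-free, and every literal is a nonempty proper subset of states. -/
def isNNF : Form V D → Prop
  | top => True
  | bot => True
  | lit _ s => s.Nonempty ∧ s ≠ Set.univ
  | neg _ => False
  | and φ ψ => isNNF φ ∧ isNNF ψ
  | or φ ψ => isNNF φ ∧ isNNF ψ

/-- The `X`-literal `s` occurs in the formula. -/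
def litOccurs (X : V) (s : Set (D X)) : Form V D → Prop
  | top => False
  | bot => False
  | lit Y t => ∃ h : Y = X, h ▸ t = s
  | neg φ => litOccurs X s φ
  | and φ ψ => litOccurs X s φ ∨ litOccurs X s ψ
  | or φ ψ => litOccurs X s φ ∨ litOccurs X s ψ

/-- Every literal in the formula is implied by the instance `I`
(i.e., contains `I`'s state of its variable). -/
def litsImp (I : ∀ X, D X) : Form V D → Prop
  | top => True
  | bot => True
  | lit X s => I X ∈ s
  | neg φ => litsImp I φ
  | and φ ψ => litsImp I φ ∧ litsImp I ψ
  | or φ ψ => litsImp I φ ∧ litsImp I ψ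

/-- Iterated selection `⊓` over a list of variables, using states from `v`. -/
noncomputable def selList (v : ∀ X, D X) : List V → Form V D → Form V D
  | [], Δ => Δ
  | X :: L, Δ => sel X (v X) (selList v L Δ)

/-- The general reason `⊓I·Δ`: selection applied for all states of instance `I`. -/
noncomputable def selAll [Fintype V] (I : ∀ X, D X) (Δ : Form V D) : Form V D :=
  selList I (Finset.univ : Finset V).toList Δ

noncomputable def listAnd : List (Form V D) → Form V D
  | [] => top
  | φ :: L => and φ (listAnd L)

/-- Universal literal quantification `∀x·Δ := (Δ|x) ∧ ⋀_{y ≠ x} (x ∨ Δ|y)`. -/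
noncomputable def uq (X : V) [Fintype (D X)] (x : D X) (Δ : Form V D) : Form V D :=
  letI : DecidableEq (D X) := fun _ _ => Classical.propDecidable _
  and (cond X x Δ)
    (listAnd ((((Finset.univ : Finset (D X)).erase x).toList).map
      (fun y => or (lit X ({x} : Set (D X))) (cond X y Δ))))

/-- Iterated universal literal quantification over a list of variables. -/
noncomputable def uqList [∀ X, Fintype (D X)] (v : ∀ X, D X) : List V → Form V D → Form V D
  | [], Δ => Δ
  | X :: L, Δ => uq X (v X) (uqList v L Δ)

/-- The complete reason `∀I·Δ`. -/
noncomputable def uqAll [Fintype V] [∀ X, Fintype (D X)] (I : ∀ X, D X) (Δ : Form V D) :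
    Form V D :=
  uqList I (Finset.univ : Finset V).toList Δ

end Form

/-- A term: a conjunction of literals over distinct variables. Variable `X` is
mentioned iff `lits X ≠ univ`; each literal is nonempty (terms are consistent). -/
structure MvTerm (V : Type) (D : V → Type) : Type where
  lits : ∀ X, Set (D X)
  nonempty : ∀ X, (lits X).Nonempty

/-- A clause: a disjunction of literals over distinct variables. Variable `X` is
mentioned iff `lits X ≠ ∅`; each literal is proper (clauses are never valid). -/
structure MvClause (V : Type) (D : V → Type) : Type where
  lits : ∀ X, Set (D X)
  proper : ∀ X, lits X ≠ Set.univ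

namespace MvTerm

variable {V : Type} {D : V → Type}

def tsat (w : ∀ X, D X) (τ : MvTerm V D) : Prop := ∀ X, w X ∈ τ.lits X

def vars (τ : MvTerm V D) : Set V := {X | τ.lits X ≠ Set.univ}

/-- A simple term assigns a single state to each of its variables. -/
def simple (τ : MvTerm V D) : Prop :=
  ∀ X, τ.lits X ≠ Set.univ → ∃ x, τ.lits X = ({x} : Set (D X))

end MvTerm

namespace MvClause

variable {V : Type} {D : V → Type}

def csat (w : ∀ X, D X) (σ : MvClause V D) : Prop := ∃ X, w X ∈ σ.lits X

def vars (σ : MvClause V D) : Set V := {X | σ.lits X ≠ (∅ : Set (D X))}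

/-- A simple clause: all its literals are single states. -/
def simple (σ : MvClause V D) : Prop :=
  ∀ X, σ.lits X ≠ (∅ : Set (D X)) → ∃ x, σ.lits X = ({x} : Set (D X))

end MvClause

section PrimeDefs

variable {V : Type} {D : V → Type}

def termImp (τ τ' : MvTerm V D) : Prop := ∀ w, τ.tsat w → τ'.tsat w

def clauseImp (σ σ' : MvClause V D) : Prop := ∀ w, σ.csat w → σ'.csat w

/-- A prime implicant of the set of worlds `M`: a ⊨-maximal term implying `M`. -/
def isPrimeImplicantOf (M : (∀ X, D X) → Prop) (τ : MvTerm V D) : Prop :=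
  (∀ w, τ.tsat w → M w) ∧
  ∀ τ' : MvTerm V D, (∀ w, τ'.tsat w → M w) → termImp τ τ' → τ' = τ

/-- A prime implicate of the set of worlds `M`: a ⊨-minimal clause implied by `M`. -/
def isPrimeImplicateOf (M : (∀ X, D X) → Prop) (σ : MvClause V D) : Prop :=
  (∀ w, M w → σ.csat w) ∧
  ∀ σ' : MvClause V D, (∀ w, M w → σ'.csat w) → clauseImp σ' σ → σ' = σ

/-- Remove subsumed terms: delete any term strictly implied by another in the set. -/
def removeSubsumedT (S : Set (MvTerm V D)) : Set (MvTerm V D) :=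
  {τ ∈ S | ¬ ∃ τ' ∈ S, τ' ≠ τ ∧ termImp τ τ'}

/-- Remove subsumed clauses: delete any clause strictly implying another in the set. -/
def removeSubsumedC (S : Set (MvClause V D)) : Set (MvClause V D) :=
  {σ ∈ S | ¬ ∃ σ' ∈ S, σ' ≠ σ ∧ clauseImp σ' σ}

end PrimeDefs

/-- The term consisting of the single `X`-literal `ℓ`. -/
noncomputable def litTerm {V : Type} {D : V → Type} [∀ Y, Nonempty (D Y)]
    (X : V) (ℓ : Set (D X)) (h : ℓ.Nonempty) : MvTerm V D where
  lits := fun Y => if hXY : X = Y then hXY ▸ ℓ else Set.univ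
  nonempty := by
    intro Y
    try dsimp only
    split
    · next hXY => cases hXY; exact h
    · exact Set.univ_nonempty

section Helpers

variable {V : Type} {D : V → Type}

lemma MvTerm.ext' {τ τ' : MvTerm V D} (h : τ.lits = τ'.lits) : τ = τ' := by
  cases τ; cases τ'; cases h; rfl

/-- Update a world at one variable. -/
noncomputable def updW (w : ∀ Y, D Y) (X : V) (x : D X) : ∀ Y, D Y :=
  fun Y => if h : X = Y then h ▸ x else w Y

lemma updW_same (w : ∀ Y, D Y) (X : V) (x : D X) : updW w X x X = x := by
  simp [updW]

lemma updW_ne (w : ∀ Y, D Y) {X Y : V} (x : D X) (h : X ≠ Y) : updW w X x Y = w Y := by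
  simp [updW, h]

lemma litTerm_lits_same [∀ Y, Nonempty (D Y)] (X : V) (ℓ : Set (D X)) (h : ℓ.Nonempty) :
    (litTerm X ℓ h).lits X = ℓ := by
  simp [litTerm]

lemma litTerm_lits_ne [∀ Y, Nonempty (D Y)] {X Y : V} (ℓ : Set (D X)) (h : ℓ.Nonempty)
    (hXY : X ≠ Y) : (litTerm X ℓ h).lits Y = Set.univ := by
  simp [litTerm, hXY]

lemma termImp_iff [∀ Y, Nonempty (D Y)] (τ τ' : MvTerm V D) :
    termImp τ τ' ↔ ∀ Y, τ.lits Y ⊆ τ'.lits Y := by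
  constructor
  · intro hI Y y hy
    classical
    set w : ∀ Z, D Z := updW (fun Z => (τ.nonempty Z).some) Y y with hw
    have hws : τ.tsat w := by
      intro Z
      by_cases hZ : Y = Z
      · subst hZ; rw [hw, updW_same]; exact hy
      · rw [hw, updW_ne _ _ hZ]; exact (τ.nonempty Z).some_mem
    have := hI w hws Y
    rwa [hw, updW_same] at this
  · intro hsub w hw Y
    exact hsub Y (hw Y)

/-- Monotonicity of negation-free formulas. -/
lemma sat_mono {α : Form V D} (hα : Form.isNNF α) {w w' : ∀ Y, D Y}
    (hlit : ∀ (Y : V) (s : Set (D Y)), Form.litOccurs Y s α → w Y ∈ s → w' Y ∈ s) :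
    Form.sat w α → Form.sat w' α := by
  induction α with
  | top => exact fun _ => trivial
  | bot => exact id
  | lit Y s => exact hlit Y s ⟨rfl, rfl⟩
  | neg φ ih => exact hα.elim
  | and φ ψ ihφ ihψ =>
      intro hs
      exact ⟨ihφ hα.1 (fun Y s hocc => hlit Y s (Or.inl hocc)) hs.1,
             ihψ hα.2 (fun Y s hocc => hlit Y s (Or.inr hocc)) hs.2⟩
  | or φ ψ ihφ ihψ =>
      intro hs
      rcases hs with hs | hs
      · exact Or.inl (ihφ hα.1 (fun Y s hocc => hlit Y s (Or.inl hocc)) hs)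
      · exact Or.inr (ihψ hα.2 (fun Y s hocc => hlit Y s (Or.inr hocc)) hs)

end Helpers

/-- prime implicants of a fixated disjunction `α ∨ ℓ`, where `α` is
an NNF and `ℓ` is an `X`-literal with `ℓ ⊨ ℓ'` and `ℓ ≠ ℓ'` for every `X`-literal
`ℓ'` occurring in `α`: they are the prime implicants of `α` together with `ℓ`,
after removing subsumed terms. -/
theorem prime_implicants_fixated_disjunction {V : Type} {D : V → Type}
    [∀ Y, Nonempty (D Y)] (X : V) (α : Form V D) (ℓ : Set (D X))
    (hα : Form.isNNF α) (hne : ℓ.Nonempty) (hpr : ℓ ≠ Set.univ)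
    (h : ∀ s : Set (D X), Form.litOccurs X s α → ℓ ⊆ s ∧ ℓ ≠ s) :
    {τ : MvTerm V D |
        isPrimeImplicantOf (fun w => Form.sat w (Form.or α (Form.lit X ℓ))) τ} =
    removeSubsumedT
      ({τ : MvTerm V D | isPrimeImplicantOf (fun w => Form.sat w α) τ} ∪
        {litTerm X ℓ hne}) := by
  classical
  set L := litTerm X ℓ hne with hLdef
  have hLX : L.lits X = ℓ := litTerm_lits_same X ℓ hne
  have hLu : ∀ Y, X ≠ Y → L.lits Y = Set.univ := fun Y hXY => litTerm_lits_ne ℓ hne hXY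
  -- L is an implicant of α ∨ ℓ
  have hLimp : ∀ w, L.tsat w → Form.sat w (Form.or α (Form.lit X ℓ)) := by
    intro w hw
    right
    have := hw X
    rwa [hLX] at this
  -- monotonicity specialized to updates at X
  have mono : ∀ (w : ∀ Y, D Y) (y : D X), w X ∈ ℓ →
      Form.sat (updW w X y) α → Form.sat w α := by
    intro w y hwX
    apply sat_mono hα
    intro Z s hocc hmem
    by_cases hZ : X = Z
    · subst hZ
      exact (h s hocc).1 hwX
    · rwa [updW_ne _ _ hZ] at hmem
  -- Claim A : a non-implicant of α that implies α ∨ ℓ has its X-literal inside ℓ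
  have claimA : ∀ τ' : MvTerm V D,
      (∀ w, τ'.tsat w → Form.sat w (Form.or α (Form.lit X ℓ))) →
      ¬ (∀ w, τ'.tsat w → Form.sat w α) → τ'.lits X ⊆ ℓ := by
    intro τ' hM hnα
    push_neg at hnα
    obtain ⟨w₀, hw₀, hw₀α⟩ := hnα
    have hw₀X : w₀ X ∈ ℓ := (hM w₀ hw₀).resolve_left hw₀α
    intro y hy
    by_contra hyℓ
    have hw₁ : τ'.tsat (updW w₀ X y) := by
      intro Z
      by_cases hZ : X = Z
      · subst hZ; rw [updW_same]; exact hy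
      · rw [updW_ne _ _ hZ]; exact hw₀ Z
    rcases hM _ hw₁ with hs | hs
    · exact hw₀α (mono w₀ y hw₀X hs)
    · have hyy : updW w₀ X y X ∈ ℓ := hs
      rw [updW_same] at hyy
      exact hyℓ hyy
  -- the maximal single-X implicant of α
  set tstar : Set (D X) := {x | ∀ w : ∀ Y, D Y, w X = x → Form.sat w α} with htsdef
  have tstarPrime : ∀ hts : tstar.Nonempty,
      isPrimeImplicantOf (fun w => Form.sat w α) (litTerm X tstar hts) := by
    intro hts
    constructor
    · intro w hw
      have hwX : w X ∈ tstar := by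
        have := hw X
        rwa [litTerm_lits_same] at this
      exact hwX w rfl
    · intro τ'' himp hle
      rw [termImp_iff] at hle
      apply MvTerm.ext'
      funext Y
      by_cases hXY : X = Y
      · subst hXY
        rw [litTerm_lits_same]
        apply Set.Subset.antisymm
        · intro x hx
          intro w hwx
          apply himp
          intro Z
          by_cases hZ : X = Z
          · subst hZ; rw [hwx]; exact hx
          · have := hle Z
            rw [litTerm_lits_ne _ _ hZ] at this
            exact this (Set.mem_univ _)
        · have := hle X
          rwa [litTerm_lits_same] at this
      · rw [litTerm_lits_ne _ _ hXY]
        have := hle Y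
        rw [litTerm_lits_ne _ _ hXY] at this
        exact Set.eq_univ_of_univ_subset this
  ext τ
  simp only [Set.mem_setOf_eq, removeSubsumedT, Set.mem_sep_iff, Set.mem_union,
    Set.mem_singleton_iff]
  constructor
  · -- ⊆ : a prime implicant of α ∨ ℓ is in the set and unsubsumed
    rintro ⟨himp, hprime⟩
    have hmem : isPrimeImplicantOf (fun w => Form.sat w α) τ ∨ τ = L := by
      by_cases hτα : ∀ w, τ.tsat w → Form.sat w α
      · left
        refine ⟨hτα, ?_⟩
        intro τ' hτ' hle
        exact hprime τ' (fun w hw => Or.inl (hτ' w hw)) hle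
      · right
        have hsub : τ.lits X ⊆ ℓ := claimA τ himp hτα
        have hτL : termImp τ L := by
          rw [termImp_iff]
          intro Y
          by_cases hXY : X = Y
          · subst hXY; rw [hLX]; exact hsub
          · rw [hLu Y hXY]; exact Set.subset_univ _
        exact (hprime L hLimp hτL).symm
    refine ⟨hmem, ?_⟩
    rintro ⟨τ'', hτ''mem, hτ''ne, hτ''le⟩
    have : τ'' = τ := by
      apply hprime
      · rcases hτ''mem with hp | hp
        · exact fun w hw => Or.inl (hp.1 w hw)
        · subst hp; exact hLimp
      · exact hτ''le
    exact hτ''ne this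
  · -- ⊇ : a surviving element is a prime implicant of α ∨ ℓ
    rintro ⟨hmem, hnosub⟩
    have himp : ∀ w, τ.tsat w → Form.sat w (Form.or α (Form.lit X ℓ)) := by
      rcases hmem with hp | hp
      · exact fun w hw => Or.inl (hp.1 w hw)
      · subst hp; exact hLimp
    refine ⟨himp, ?_⟩
    intro τ' hτ' hle
    by_cases hτ'α : ∀ w, τ'.tsat w → Form.sat w α
    · -- τ' is an implicant of α
      rcases hmem with hp | hp
      · exact hp.2 τ' hτ'α hle
      · -- τ = L
        subst hp
        rw [termImp_iff] at hle
        have hℓt : ℓ ⊆ τ'.lits X := by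
          have := hle X
          rwa [hLX] at this
        have huniv : ∀ Y, X ≠ Y → τ'.lits Y = Set.univ := by
          intro Y hXY
          have := hle Y
          rw [hLu Y hXY] at this
          exact Set.eq_univ_of_univ_subset this
        have htsub : τ'.lits X ⊆ tstar := by
          intro x hx w hwx
          apply hτ'α
          intro Z
          by_cases hZ : X = Z
          · subst hZ; rw [hwx]; exact hx
          · rw [huniv Z hZ]; exact Set.mem_univ _
        by_cases heq : τ'.lits X = ℓ
        · apply MvTerm.ext'
          funext Y
          by_cases hXY : X = Y
          · subst hXY; rw [heq, hLX]
          · rw [huniv Y hXY, hLu Y hXY]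
        · exfalso
          have hts : tstar.Nonempty := hne.mono (hℓt.trans htsub)
          apply hnosub
          refine ⟨litTerm X tstar hts, Or.inl (tstarPrime hts), ?_, ?_⟩
          · intro hcon
            apply heq
            apply Set.Subset.antisymm _ hℓt
            have : (litTerm X tstar hts).lits X = L.lits X := by rw [hcon]
            rw [litTerm_lits_same, hLX] at this
            rw [← this]
            exact htsub
          · rw [termImp_iff]
            intro Y
            by_cases hXY : X = Y
            · subst hXY
              rw [hLX, litTerm_lits_same]
              exact hℓt.trans htsub
            · rw [hLu Y hXY, litTerm_lits_ne _ _ hXY]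
    · -- τ' not an implicant of α : its X-literal is inside ℓ
      have hsub : τ'.lits X ⊆ ℓ := claimA τ' hτ' hτ'α
      have hτ'L : termImp τ' L := by
        rw [termImp_iff]
        intro Y
        by_cases hXY : X = Y
        · subst hXY; rw [hLX]; exact hsub
        · rw [hLu Y hXY]; exact Set.subset_univ _
      rcases hmem with hp | hp
      · -- τ ∈ PI(α) and τ ⊨ τ' ⊨ L ; removal forces L = τ, then contradiction
        have hτL : termImp τ L := fun w hw => hτ'L w (hle w hw)
        by_cases hLτ : L = τ
        · exfalso
          apply hτ'α
          intro w hw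
          exact hp.1 w (by rw [← hLτ]; exact hτ'L w hw)
        · exact absurd ⟨L, Or.inr rfl, hLτ, hτL⟩ hnosub
      · -- τ = L : then τ' = L
        subst hp
        rw [termImp_iff] at hle hτ'L
        apply MvTerm.ext'
        funext Y
        by_cases hXY : X = Y
        · subst hXY
          have h1 := hle X
          have h2 := hτ'L X
          rw [hLX] at h1 h2
          rw [hLX]
          exact Set.Subset.antisymm h2 h1
        · have := hle Y
          rw [hLu Y hXY] at this
          rw [hLu Y hXY]
          exact Set.eq_univ_of_univ_subset this
end

section
/- Every sufficient reason is the projection of a general sufficient reason: a simple term τ is a sufficient reason for the decision on instance I in class Δ if and only if τ = I ⊓ τ' for some general sufficient reason τ', where I ⊓ τ' denotes the smallest subterm of I that implies τ'. -/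
open scoped Classical

section Reasons

variable {V : Type} {D : V → Type}

/-- Instance `I` implies (satisfies) term `τ`. -/
def instEntailsT (I : ∀ X, D X) (τ : MvTerm V D) : Prop := MvTerm.tsat I τ

/-- Term `τ` implies formula `Δ`. -/
def termImpF (τ : MvTerm V D) (Δ : Form V D) : Prop :=
  ∀ w, MvTerm.tsat w τ → Form.sat w Δ

/-- `τ` is a weakest term with `I ⊨ τ ⊨ Δ`. -/
def weakestTermFor (I : ∀ X, D X) (Δ : Form V D) (τ : MvTerm V D) : Prop :=
  instEntailsT I τ ∧ termImpF τ Δ ∧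
  ∀ τ' : MvTerm V D, instEntailsT I τ' → termImpF τ' Δ → termImp τ τ' → τ' = τ

/-- A sufficient reason: a weakest simple term `τ` with `I ⊨ τ ⊨ Δ`. -/
def isSR (I : ∀ X, D X) (Δ : Form V D) (τ : MvTerm V D) : Prop :=
  MvTerm.simple τ ∧ instEntailsT I τ ∧ termImpF τ Δ ∧
  ∀ τ' : MvTerm V D, MvTerm.simple τ' → instEntailsT I τ' → termImpF τ' Δ →
    termImp τ τ' → τ' = τ

/-- A general sufficient reason: a weakest term with `I ⊨ τ ⊨ Δ` that is
variable-minimal among such weakest terms. -/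
def isGSR (I : ∀ X, D X) (Δ : Form V D) (τ : MvTerm V D) : Prop :=
  weakestTermFor I Δ τ ∧
  ¬ ∃ τ' : MvTerm V D, weakestTermFor I Δ τ' ∧ MvTerm.vars τ' ⊂ MvTerm.vars τ

/-- `I ⊓ τ'`: the smallest subterm of `I` that implies `τ'` (the conjunction of
`I`'s states on the variables mentioned by `τ'`), for `I ⊨ τ'`. -/
noncomputable def projTerm (I : ∀ X, D X) (τ' : MvTerm V D) : MvTerm V D where
  lits := fun X =>
    if τ'.lits X = Set.univ then Set.univ else ({I X} : Set (D X))
  nonempty := by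
    intro X
    try dsimp only
    split
    · exact ⟨I X, Set.mem_univ _⟩
    · exact ⟨I X, rfl⟩

end Reasons

section AuxProof

variable {V : Type} {D : V → Type}

theorem MvTerm.ext'_s16 {τ₁ τ₂ : MvTerm V D} (h : τ₁.lits = τ₂.lits) : τ₁ = τ₂ := by
  cases τ₁; cases τ₂; simp_all

/-- Semantic implication between terms is pointwise inclusion of literals. -/
theorem termImp_iff_s16 {τ₁ τ₂ : MvTerm V D} :
    termImp τ₁ τ₂ ↔ ∀ X, τ₁.lits X ⊆ τ₂.lits X := by
  constructor
  · intro h X x hx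
    classical
    set w : ∀ Y, D Y := fun Y => if hY : X = Y then hY ▸ x else (τ₁.nonempty Y).choose
      with hwdef
    have hwX : w X = x := by simp [hwdef]
    have hwτ : τ₁.tsat w := by
      intro Y
      by_cases hY : X = Y
      · subst hY; rw [hwX]; exact hx
      · simpa [hwdef, hY] using (τ₁.nonempty Y).choose_spec
    have := h w hwτ X
    rwa [hwX] at this
  · intro h w hw X
    exact h X (hw X)

/-- Only finitely many variables occur in a formula. -/
theorem occurs_finite (φ : Form V D) : {X | Form.occurs X φ}.Finite := by
  induction φ with
  | top => simpa [Form.occurs] using Set.finite_empty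
  | bot => simpa [Form.occurs] using Set.finite_empty
  | lit Y s =>
      have : {X | Form.occurs X (Form.lit Y s)} = {Y} := by
        ext Z; simp [Form.occurs, eq_comm]
      rw [this]; exact Set.finite_singleton Y
  | neg φ ih => exact ih
  | and φ ψ ih₁ ih₂ =>
      have : {X | Form.occurs X (Form.and φ ψ)}
          = {X | Form.occurs X φ} ∪ {X | Form.occurs X ψ} := rfl
      rw [this]; exact ih₁.union ih₂
  | or φ ψ ih₁ ih₂ =>
      have : {X | Form.occurs X (Form.or φ ψ)}
          = {X | Form.occurs X φ} ∪ {X | Form.occurs X ψ} := rfl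
      rw [this]; exact ih₁.union ih₂

/-- Satisfaction only depends on the occurring variables. -/
theorem sat_congr (φ : Form V D) (w w' : ∀ X, D X)
    (h : ∀ X, Form.occurs X φ → w X = w' X) : Form.sat w φ ↔ Form.sat w' φ := by
  induction φ with
  | top => simp [Form.sat]
  | bot => simp [Form.sat]
  | lit Y s =>
      have hY : w Y = w' Y := h Y rfl
      simp [Form.sat, hY]
  | neg φ ih => simp only [Form.sat]; rw [ih h]
  | and φ ψ ih₁ ih₂ =>
      simp only [Form.sat]
      rw [ih₁ (fun X hX => h X (Or.inl hX)), ih₂ (fun X hX => h X (Or.inr hX))]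
  | or φ ψ ih₁ ih₂ =>
      simp only [Form.sat]
      rw [ih₁ (fun X hX => h X (Or.inl hX)), ih₂ (fun X hX => h X (Or.inr hX))]

/-- Zorn's lemma: above any term `τ` with `I ⊨ τ ⊨ Δ` there is a weakest term. -/
theorem exists_weakest_above (Δ : Form V D) (I : ∀ X, D X) (τ : MvTerm V D)
    (h1 : instEntailsT I τ) (h2 : termImpF τ Δ) :
    ∃ τ₀ : MvTerm V D, weakestTermFor I Δ τ₀ ∧ termImp τ τ₀ := by
  classical
  set s : Set (∀ X, Set (D X)) :=
    {f | (∀ X, I X ∈ f X) ∧ ∀ w : ∀ X, D X, (∀ X, w X ∈ f X) → Form.sat w Δ} with hsdef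
  have hτs : τ.lits ∈ s := ⟨h1, h2⟩
  have hchain : ∀ c ⊆ s, IsChain (· ≤ ·) c → ∀ y ∈ c, ∃ ub ∈ s, ∀ z ∈ c, z ≤ ub := by
    intro c hcs hc y hy
    refine ⟨fun X => {x | ∃ f ∈ c, x ∈ f X}, ⟨?_, ?_⟩, ?_⟩
    · intro X
      exact ⟨y, hy, (hcs hy).1 X⟩
    · intro w hw
      have key : ∀ T : Set V, T.Finite → ∃ g ∈ c, ∀ X ∈ T, w X ∈ g X := by
        intro T hT
        refine Set.Finite.induction_on (motive := fun T _ => ∃ g ∈ c, ∀ X ∈ T, w X ∈ g X) T hT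
          ⟨y, hy, fun X hX => absurd hX (Set.notMem_empty X)⟩ ?_
        intro a t ha hft ih
        obtain ⟨g, hgc, hgT⟩ := ih
        obtain ⟨f, hfc, hfa⟩ := hw a
        rcases hc.total hfc hgc with hfg | hgf
        · exact ⟨g, hgc, fun X hX => by
            rcases hX with rfl | hX
            · exact hfg X hfa
            · exact hgT X hX⟩
        · exact ⟨f, hfc, fun X hX => by
            rcases hX with rfl | hX
            · exact hfa
            · exact hgf X (hgT X hX)⟩
      obtain ⟨g, hgc, hgdom⟩ := key {X | Form.occurs X Δ} (occurs_finite Δ)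
      set w' : ∀ X, D X := fun X => if Form.occurs X Δ then w X else I X with hw'def
      have hw'g : ∀ X, w' X ∈ g X := by
        intro X
        by_cases hX : Form.occurs X Δ
        · simpa [hw'def, hX] using hgdom X hX
        · simpa [hw'def, hX] using (hcs hgc).1 X
      have hsatw' : Form.sat w' Δ := (hcs hgc).2 w' hw'g
      have : Form.sat w Δ ↔ Form.sat w' Δ :=
        sat_congr Δ w w' (fun X hX => by simp [hw'def, hX])
      exact this.2 hsatw'
    · intro z hz X x hx
      exact ⟨z, hz, hx⟩
  obtain ⟨m, hle, hmmem, hmmax⟩ := zorn_le_nonempty₀ s hchain τ.lits hτs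
  refine ⟨⟨m, fun X => ⟨I X, hmmem.1 X⟩⟩, ⟨hmmem.1, hmmem.2, ?_⟩, termImp_iff_s16.2 hle⟩
  intro τ' hIτ' hτ'Δ himp
  have hsub : ∀ X, m X ⊆ τ'.lits X := termImp_iff_s16.1 himp
  have hτ's : τ'.lits ∈ s := ⟨hIτ', hτ'Δ⟩
  have : τ'.lits ≤ m := hmmax hτ's (fun X => hsub X)
  exact MvTerm.ext'_s16 (le_antisymm this (fun X => hsub X))

theorem projTerm_simple (I : ∀ X, D X) (τ' : MvTerm V D) :
    MvTerm.simple (projTerm I τ') := by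
  intro X hX
  by_cases h : τ'.lits X = Set.univ
  · exact absurd (by simp [projTerm, h]) hX
  · exact ⟨I X, by simp [projTerm, h]⟩

theorem projTerm_entails (I : ∀ X, D X) (τ' : MvTerm V D) :
    instEntailsT I (projTerm I τ') := by
  intro X
  by_cases h : τ'.lits X = Set.univ <;> simp [projTerm, h]

theorem projTerm_imp (I : ∀ X, D X) (τ' : MvTerm V D) (h : instEntailsT I τ') :
    termImp (projTerm I τ') τ' := by
  refine termImp_iff_s16.2 fun X => ?_
  by_cases h0 : τ'.lits X = Set.univ
  · simp [projTerm, h0]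
  · intro x hx
    have : x ∈ ({I X} : Set (D X)) := by simpa [projTerm, h0] using hx
    rcases this with rfl
    exact h X

theorem simple_lits {I : ∀ X, D X} {σ : MvTerm V D} (hs : MvTerm.simple σ)
    (hI : instEntailsT I σ) (X : V) :
    σ.lits X = Set.univ ∨ σ.lits X = ({I X} : Set (D X)) := by
  by_cases h : σ.lits X = Set.univ
  · exact Or.inl h
  · obtain ⟨x, hx⟩ := hs X h
    have : I X ∈ σ.lits X := hI X
    rw [hx] at this
    rcases this with rfl
    exact Or.inr hx

end AuxProof

/-- a simple term `τ` is a sufficient reason for the decision on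
instance `I` in class `Δ` iff `τ = I ⊓ τ'` for some general sufficient reason `τ'`. -/
theorem sr_iff_projection_of_gsr {V : Type} {D : V → Type}
    (Δ : Form V D) (I : ∀ X, D X) (hI : Form.sat I Δ)
    (τ : MvTerm V D) (hτ : MvTerm.simple τ) :
    isSR I Δ τ ↔ ∃ τ' : MvTerm V D, isGSR I Δ τ' ∧ τ = projTerm I τ' := by
  constructor
  · rintro ⟨hsimp, hent, himpF, hmax⟩
    obtain ⟨τ₀, hw, himp⟩ := exists_weakest_above Δ I τ hent himpF
    have hsub : ∀ X, τ.lits X ⊆ τ₀.lits X := termImp_iff_s16.1 himp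
    -- the projection of τ₀ equals τ
    have hπτ : projTerm I τ₀ = τ := by
      refine hmax _ (projTerm_simple I τ₀) (projTerm_entails I τ₀)
        (fun w hw' => hw.2.1 w (projTerm_imp I τ₀ hw.1 w hw')) (termImp_iff_s16.2 fun X => ?_)
      by_cases h0 : τ₀.lits X = Set.univ
      · simp [projTerm, h0]
      · have hne : τ.lits X ≠ Set.univ := by
          intro h; exact h0 (Set.univ_subset_iff.1 (h ▸ hsub X))
        rcases simple_lits hsimp hent X with h | h
        · exact absurd h hne
        · rw [h]; simp [projTerm, h0]
    have hvars : ∀ X, τ₀.lits X = Set.univ ↔ τ.lits X = Set.univ := by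
      intro X
      constructor
      · intro h
        have : (projTerm I τ₀).lits X = Set.univ := by simp [projTerm, h]
        rwa [hπτ] at this
      · intro h
        exact Set.univ_subset_iff.1 (h ▸ hsub X)
    refine ⟨τ₀, ⟨hw, ?_⟩, hπτ.symm⟩
    rintro ⟨τ'', hw'', hss⟩
    -- the projection of τ'' also equals τ, contradicting vars τ'' ⊊ vars τ₀
    have hssub : MvTerm.vars τ'' ⊆ MvTerm.vars τ₀ := hss.1
    have hπ''τ : projTerm I τ'' = τ := by
      refine hmax _ (projTerm_simple I τ'') (projTerm_entails I τ'')
        (fun w hw' => hw''.2.1 w (projTerm_imp I τ'' hw''.1 w hw'))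
        (termImp_iff_s16.2 fun X => ?_)
      by_cases h0 : τ''.lits X = Set.univ
      · simp [projTerm, h0]
      · have hX'' : X ∈ MvTerm.vars τ'' := h0
        have hX₀ : X ∈ MvTerm.vars τ₀ := hssub hX''
        have hne : τ.lits X ≠ Set.univ := fun h => hX₀ ((hvars X).2 h)
        rcases simple_lits hsimp hent X with h | h
        · exact absurd h hne
        · rw [h]; simp [projTerm, h0]
    obtain ⟨X₀, hX₀in, hX₀out⟩ := Set.exists_of_ssubset hss
    have hτ₀ne : τ₀.lits X₀ ≠ Set.univ := hX₀in
    have hτne : τ.lits X₀ ≠ Set.univ := fun h => hτ₀ne ((hvars X₀).2 h)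
    have hτ''univ : τ''.lits X₀ = Set.univ := not_not.1 hX₀out
    have : (projTerm I τ'').lits X₀ = Set.univ := by simp [projTerm, hτ''univ]
    rw [hπ''τ] at this
    exact hτne this
  · rintro ⟨τ', ⟨hw', hmin⟩, rfl⟩
    refine ⟨projTerm_simple I τ', projTerm_entails I τ',
      fun w hw => hw'.2.1 w (projTerm_imp I τ' hw'.1 w hw), ?_⟩
    intro σ hσs hσI hσΔ himp
    have hsub : ∀ X, (projTerm I τ').lits X ⊆ σ.lits X := termImp_iff_s16.1 himp
    by_contra hne
    have : ∃ X₀, σ.lits X₀ ≠ (projTerm I τ').lits X₀ := by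
      by_contra h
      push_neg at h
      exact hne (MvTerm.ext'_s16 (funext h))
    obtain ⟨X₀, hX₀⟩ := this
    -- at X₀, the projection is {I X₀} and σ is univ
    have hπne : (projTerm I τ').lits X₀ ≠ Set.univ := by
      intro h
      have : σ.lits X₀ = Set.univ := Set.univ_subset_iff.1 (h ▸ hsub X₀)
      exact hX₀ (this.trans h.symm)
    have hτ'ne : τ'.lits X₀ ≠ Set.univ := by
      intro h; exact hπne (by simp [projTerm, h])
    have hπeq : (projTerm I τ').lits X₀ = ({I X₀} : Set (D X₀)) := by
      simp [projTerm, hτ'ne]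
    have hσuniv : σ.lits X₀ = Set.univ := by
      rcases simple_lits hσs hσI X₀ with h | h
      · exact h
      · exact absurd (h.trans hπeq.symm) hX₀
    -- build a weakest term above σ; its vars are strictly inside vars τ'
    obtain ⟨τ'', hw'', himp''⟩ := exists_weakest_above Δ I σ hσI hσΔ
    have hsub'' : ∀ X, σ.lits X ⊆ τ''.lits X := termImp_iff_s16.1 himp''
    refine hmin ⟨τ'', hw'', ?_, ?_⟩
    · intro X hX
      have hτ''ne : τ''.lits X ≠ Set.univ := hX
      have hσne : σ.lits X ≠ Set.univ := by
        intro h; exact hτ''ne (Set.univ_subset_iff.1 (h ▸ hsub'' X))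
      have hπne' : (projTerm I τ').lits X ≠ Set.univ := by
        intro h; exact hσne (Set.univ_subset_iff.1 (h ▸ hsub X))
      show τ'.lits X ≠ Set.univ
      intro h; exact hπne' (by simp [projTerm, h])
    · intro hss
      have hX₀' : X₀ ∈ MvTerm.vars τ' := hτ'ne
      have : τ''.lits X₀ ≠ Set.univ := hss hX₀'
      exact this (Set.univ_subset_iff.1 (hσuniv ▸ hsub'' X₀))
end
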